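/- Nonnegativity of the derivative from monotonicity of its weighted version (the contradiction argument in the proof of Theorem 5.5): let U : ℝ → ℝ be differentiable at every point of (0,1), suppose the function t ↦ t²·U′(t) is nondecreasing on (0,1), and suppose U is bounded above on (0, 1/2). Then U′(t) ≥ 0 for every t ∈ (0,1). -/

import Mathlib

/-- Nonnegativity of the derivative from monotonicity of its weighted version: if `U`
is differentiable on `(0,1)`, `t ↦ t²·U′(t)` is nondecreasing on `(0,1)`, and `U`
is bounded above on `(0,1/2)`, then `U′ ≥ 0` on `(0,1)`. -/
theorem deriv_nonneg_of_monotone_weighted (U : ℝ → ℝ)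
    (hdiff : ∀ t ∈ Set.Ioo (0 : ℝ) 1, DifferentiableAt ℝ U t)
    (hmono : MonotoneOn (fun t => t ^ 2 * deriv U t) (Set.Ioo (0 : ℝ) 1))
    (hbdd : ∃ M : ℝ, ∀ t ∈ Set.Ioo (0 : ℝ) (1 / 2), U t ≤ M) :
    ∀ t ∈ Set.Ioo (0 : ℝ) 1, 0 ≤ deriv U t := by
  intro t ht
  by_contra hneg
  push_neg at hneg
  obtain ⟨M, hM⟩ := hbdd
  set T : ℝ := min t (1/4) with hTdef
  have hT0 : 0 < T := lt_min ht.1 (by norm_num)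
  have hT4 : T ≤ 1/4 := min_le_right _ _
  have hTmem : T ∈ Set.Ioo (0:ℝ) 1 := ⟨hT0, by linarith⟩
  set c : ℝ := T ^ 2 * deriv U T with hcdef
  have hc : c < 0 :=
    lt_of_le_of_lt (hmono hTmem ht (min_le_left _ _))
      (mul_neg_of_pos_of_neg (pow_pos ht.1 2) hneg)
  set g : ℝ → ℝ := fun s => U s + c / s with hgdef
  have hgder : ∀ s ∈ Set.Ioo (0:ℝ) T, HasDerivAt g (deriv U s - c / s ^ 2) s := by
    intro s hs
    have hs0 : s ≠ 0 := ne_of_gt hs.1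
    have h1 : HasDerivAt U (deriv U s) s :=
      (hdiff s ⟨hs.1, lt_trans hs.2 hTmem.2⟩).hasDerivAt
    have h2 : HasDerivAt (fun x : ℝ => c / x) (-(c / s ^ 2)) s := by
      have := (hasDerivAt_inv hs0).const_mul c
      simpa [div_eq_mul_inv, mul_neg] using this
    rw [sub_eq_add_neg]; exact h1.add h2
  have hdg : ∀ s ∈ Set.Ioc (0:ℝ) T, DifferentiableAt ℝ g s := by
    intro s hs
    exact (hdiff s ⟨hs.1, lt_of_le_of_lt hs.2 hTmem.2⟩).add
      ((differentiableAt_const c).div differentiableAt_fun_id (ne_of_gt hs.1))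
  have hanti : AntitoneOn g (Set.Ioc 0 T) := by
    apply antitoneOn_of_deriv_nonpos (convex_Ioc _ _)
    · exact fun s hs => ((hdg s hs).continuousAt).continuousWithinAt
    · rw [interior_Ioc]
      exact fun s hs => (hgder s hs).differentiableAt.differentiableWithinAt
    · rw [interior_Ioc]
      intro s hs
      rw [(hgder s hs).deriv]
      have h := hmono ⟨hs.1, lt_trans hs.2 hTmem.2⟩ hTmem (le_of_lt hs.2)
      have hs2 : 0 < s ^ 2 := pow_pos hs.1 2
      have hle : deriv U s ≤ c / s ^ 2 := (le_div_iff₀ hs2).mpr (by rw [mul_comm]; exact h)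
      linarith
  set K : ℝ := U T + c / T with hKdef
  have hden : (0:ℝ) < |M - K| + 1 := by positivity
  set a : ℝ := min (T/2) ((-c)/(|M - K| + 1)) with hadef
  have ha0 : 0 < a := lt_min (by linarith) (div_pos (by linarith) hden)
  have haT : a ≤ T/2 := min_le_left _ _
  have hga : g T ≤ g a := hanti ⟨ha0, by linarith⟩ ⟨hT0, le_refl _⟩ (by linarith)
  have h1 : K ≤ U a + c / a := hga
  have h2 : a ≤ (-c)/(|M - K| + 1) := min_le_right _ _
  have h3 : |M - K| + 1 ≤ (-c)/a := by
    rw [le_div_iff₀ ha0]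
    calc (|M - K| + 1) * a ≤ (|M - K| + 1) * ((-c)/(|M - K| + 1)) :=
          mul_le_mul_of_nonneg_left h2 (le_of_lt hden)
      _ = -c := mul_div_cancel₀ _ (ne_of_gt hden)
  have h5 : (-c)/a = -(c/a) := neg_div a c
  have h6 : M - K ≤ |M - K| := le_abs_self _
  have h7 : U a ≤ M := hM a ⟨ha0, by linarith⟩
  have h8 : c / a ≤ -(|M - K| + 1) := by linarith
  clear_value T c g K a
  linarith
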